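/- With M a finitely generated W_n(k)-module and Φ : M → M a σ-linear endomorphism as above, the natural map from M^{Φ=1}/p·M^{Φ=1} to (M/pM)^{Φ=1} is an isomorphism, i.e. M^{1−Φ}/p(M^{1−Φ}) = (M/pM)^{1−Φ}. -/

import Mathlib

set_option linter.unusedSectionVars false
set_option maxHeartbeats 1000000

/-- An algebraic closure of the finite field `𝔽_q` with `q = p ^ d` elements. -/
abbrev FqBar (p d : ℕ) [Fact p.Prime] : Type :=
  AlgebraicClosure (GaloisField p d)

/-- The Frobenius `σ` of the truncated Witt vectors `W_n(R)` of a ring `R` of characteristic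
`p`, induced by the `p`-th power map on `R`: it acts coefficientwise by `x ↦ x ^ p`. -/
noncomputable def truncatedWittFrobenius (p n : ℕ) [Fact p.Prime] (R : Type*) [CommRing R] :
    TruncatedWittVector p n R → TruncatedWittVector p n R :=
  fun x => TruncatedWittVector.mk p fun i => x.coeff i ^ p

namespace FPAux

variable (p n : ℕ) [Fact p.Prime] (k : Type*) [Field k] [CharP k p] [PerfectRing k p]

/-- coefficientwise Frobenius on truncated Witt vectors, as a ring hom -/
noncomputable def sigmaR : TruncatedWittVector p n k →+* TruncatedWittVector p n k :=
  RingHom.liftOfRightInverse (WittVector.truncate n) TruncatedWittVector.out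
    TruncatedWittVector.truncateFun_out
    ⟨(WittVector.truncate n).comp (WittVector.map (frobenius k p)), by
      intro x hx
      have hx' := (WittVector.mem_ker_truncate n x).mp hx
      rw [RingHom.mem_ker, RingHom.comp_apply, ← RingHom.mem_ker,
        WittVector.mem_ker_truncate]
      intro i hi
      rw [WittVector.map_coeff, hx' i hi, map_zero]⟩

theorem sigmaR_truncate (y : WittVector p k) :
    sigmaR p n k (WittVector.truncate n y) =
      WittVector.truncate n (WittVector.map (frobenius k p) y) :=
  RingHom.liftOfRightInverse_comp_apply _ _ _ _ y

theorem sigmaR_coeff (x : TruncatedWittVector p n k) (i : Fin n) :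
    (sigmaR p n k x).coeff i = x.coeff i ^ p := by
  obtain ⟨y, rfl⟩ := WittVector.truncate_surjective p n k x
  rw [sigmaR_truncate, WittVector.coeff_truncate, WittVector.map_coeff,
    WittVector.coeff_truncate, frobenius_def]

theorem truncFrob_eq (x : TruncatedWittVector p n k) :
    truncatedWittFrobenius p n k x = sigmaR p n k x := by
  apply TruncatedWittVector.ext
  intro i
  rw [sigmaR_coeff, truncatedWittFrobenius, TruncatedWittVector.coeff_mk]

theorem p_pow_n_eq_zero : (p : TruncatedWittVector p n k) ^ n = 0 := by
  have : (p : TruncatedWittVector p n k) ^ n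
      = WittVector.truncate n ((p : WittVector p k) ^ n) := by
    rw [map_pow, map_natCast]
  rw [this]
  apply TruncatedWittVector.ext
  intro i
  rw [WittVector.coeff_truncate, TruncatedWittVector.coeff_zero]
  exact WittVector.coeff_p_pow_eq_zero p k (by omega : (i:ℕ) ≠ n)

theorem isNoetherian_R : IsNoetherianRing (TruncatedWittVector p n k) := by
  have h1 : IsDiscreteValuationRing (WittVector p k) := WittVector.isDiscreteValuationRing
  have h2 : IsNoetherianRing (WittVector p k) := by
    have := h1.toIsPrincipalIdealRing
    exact PrincipalIdealRing.isNoetherianRing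
  exact isNoetherianRing_of_surjective _ _ (WittVector.truncate n)
    (WittVector.truncate_surjective p n k)

/-- the residue map `W_n(k) → k`, as a ring hom (sends `x` to `x.coeff 0`) -/
noncomputable def piR (hn : 0 < n) : TruncatedWittVector p n k →+* k :=
  RingHom.liftOfRightInverse (WittVector.truncate n) TruncatedWittVector.out
    TruncatedWittVector.truncateFun_out
    ⟨WittVector.constantCoeff, by
      intro x hx
      have hx' := (WittVector.mem_ker_truncate n x).mp hx
      rw [RingHom.mem_ker, WittVector.constantCoeff_apply]
      exact hx' 0 hn⟩

theorem piR_truncate (hn : 0 < n) (y : WittVector p k) :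
    piR p n k hn (WittVector.truncate n y) = y.coeff 0 :=
  RingHom.liftOfRightInverse_comp_apply _ _ _ _ y

theorem piR_surjective (hn : 0 < n) : Function.Surjective (piR p n k hn) := by
  intro a
  refine ⟨WittVector.truncate n (WittVector.teichmuller p a), ?_⟩
  rw [piR_truncate, WittVector.teichmuller_coeff_zero]

theorem piR_sigma (hn : 0 < n) (x : TruncatedWittVector p n k) :
    piR p n k hn (sigmaR p n k x) = piR p n k hn x ^ p := by
  obtain ⟨y, rfl⟩ := WittVector.truncate_surjective p n k x
  rw [sigmaR_truncate, piR_truncate, piR_truncate, WittVector.map_coeff, frobenius_def]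

theorem piR_ker (hn : 0 < n) (x : TruncatedWittVector p n k) (hx : piR p n k hn x = 0) :
    ∃ z, x = (p : TruncatedWittVector p n k) * z := by
  obtain ⟨y, rfl⟩ := WittVector.truncate_surjective p n k x
  rw [piR_truncate] at hx
  rcases eq_or_ne y 0 with rfl | hy
  · exact ⟨0, by rw [map_zero, mul_zero]⟩
  obtain ⟨m, b, hb0, rfl⟩ := WittVector.exists_eq_pow_p_mul y hy
  rcases Nat.eq_zero_or_pos m with rfl | hm
  · rw [pow_zero, one_mul] at hx ⊢
    exact absurd hx hb0
  obtain ⟨m', rfl⟩ := Nat.exists_eq_succ_of_ne_zero hm.ne'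
  refine ⟨WittVector.truncate n ((p : WittVector p k) ^ m' * b), ?_⟩
  rw [← map_natCast (WittVector.truncate n) p, ← map_mul]
  congr 1
  rw [pow_succ]
  ring

/-- the recursively defined coefficients used in the fixed-point construction -/
noncomputable def cR (t : TruncatedWittVector p n k)
    (b : ℕ → TruncatedWittVector p n k) : ℕ → TruncatedWittVector p n k
  | 0 => 1 + sigmaR p n k t * b 0
  | i + 1 => sigmaR p n k (cR t b i) + sigmaR p n k t * b (i + 1)

/-- the corresponding polynomials over the residue field -/
noncomputable def qpoly (β : ℕ → k) : ℕ → Polynomial k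
  | 0 => Polynomial.C (β 0) * Polynomial.X ^ p + 1
  | i + 1 => qpoly β i ^ p + Polynomial.C (β (i + 1)) * Polynomial.X ^ p

theorem qpoly_derivative (β : ℕ → k) (i : ℕ) :
    Polynomial.derivative (qpoly p k β i) = 0 := by
  induction i with
  | zero => simp [qpoly, Polynomial.derivative_X_pow, CharP.cast_eq_zero]
  | succ i ih =>
      simp [qpoly, Polynomial.derivative_pow, ih, Polynomial.derivative_X_pow,
        CharP.cast_eq_zero]

theorem qpoly_eval (hn : 0 < n) (t : TruncatedWittVector p n k)
    (b : ℕ → TruncatedWittVector p n k) (i : ℕ) :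
    piR p n k hn (cR p n k t b i)
      = (qpoly p k (fun j => piR p n k hn (b j)) i).eval (piR p n k hn t) := by
  induction i with
  | zero => simp [cR, qpoly, piR_sigma]; ring
  | succ i ih => simp [cR, qpoly, piR_sigma, ih]; ring



universe u

theorem key1 [IsAlgClosed k] {N : Type*} [AddCommGroup N]
    [Module (TruncatedWittVector p n k) N]
    [Module.Finite (TruncatedWittVector p n k) N]
    (Φ : N →+ N)
    (hΦ : ∀ (c : TruncatedWittVector p n k) (x : N), Φ (c • x) = sigmaR p n k c • Φ x)
    (h1 : ∀ v : N, (p : TruncatedWittVector p n k) • v = 0) (v : N) :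
    ∃ x : N, x - Φ x = v := by
  rcases Nat.eq_zero_or_pos n with rfl | hn
  · haveI : Subsingleton (TruncatedWittVector p 0 k) :=
      ⟨fun a b => TruncatedWittVector.ext fun i => i.elim0⟩
    haveI := Module.subsingleton (TruncatedWittVector p 0 k) N
    exact ⟨0, Subsingleton.elim _ _⟩
  haveI := isNoetherian_R p n k
  set R := TruncatedWittVector p n k
  set g : ℕ → N := fun i => (⇑Φ)^[i] v with hgdef
  have hg : ∀ i, g (i + 1) = Φ (g i) := fun i => Function.iterate_succ_apply' _ _ _
  set f : ℕ →o Submodule R N :=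
    ⟨fun i => Submodule.span R (g '' Set.Iic i),
      fun i j hij => Submodule.span_mono (Set.image_mono (Set.Iic_subset_Iic.mpr hij))⟩
    with hfdef
  obtain ⟨m, hm⟩ := monotone_stabilizes_iff_noetherian.mpr inferInstance f
  have hmem : g (m + 1) ∈ Submodule.span R (g '' Set.Iic m) := by
    have h2 : f m = f (m + 1) := hm (m + 1) (Nat.le_succ m)
    have h3 : g (m + 1) ∈ f (m + 1) :=
      Submodule.subset_span ⟨m + 1, Set.mem_Iic.mpr le_rfl, rfl⟩
    rw [← h2] at h3
    exact h3
  have hrange : (Set.range fun i : Fin (m + 1) => g i) = g '' Set.Iic m := by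
    ext w
    constructor
    · rintro ⟨i, rfl⟩
      exact ⟨i, Set.mem_Iic.mpr (Nat.lt_succ_iff.mp i.isLt), rfl⟩
    · rintro ⟨j, hj, rfl⟩
      exact ⟨⟨j, Nat.lt_succ_of_le (Set.mem_Iic.mp hj)⟩, rfl⟩
  have hmem' : g (m + 1) ∈ Submodule.span R (Set.range fun i : Fin (m + 1) => g i) := by
    rw [hrange]; exact hmem
  obtain ⟨bf, hbf⟩ := (Submodule.mem_span_range_iff_exists_fun R).mp hmem'
  set b : ℕ → R := fun i => if h : i < m + 1 then bf ⟨i, h⟩ else 0 with hbdef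
  have hb : ∑ i ∈ Finset.range (m + 1), b i • g i = g (m + 1) := by
    rw [Finset.sum_range]
    rw [← hbf]
    apply Finset.sum_congr rfl
    intro i _
    congr 1
    simp [hbdef, Nat.not_lt.mpr (Nat.lt_succ_iff.mp i.isLt)]
  have hbtop : b (m + 1) = 0 := dif_neg (by omega)
  -- find the root of the associated polynomial over k
  set β : ℕ → k := fun i => piR p n k hn (b i) with hβdef
  set P : Polynomial k := qpoly p k β m - Polynomial.X with hPdef
  have hPd : Polynomial.derivative P = -1 := by
    rw [hPdef, Polynomial.derivative_sub, qpoly_derivative, Polynomial.derivative_X, zero_sub]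
  have hP0 : P.degree ≠ 0 := by
    intro h
    have hC := Polynomial.eq_C_of_degree_le_zero h.le
    rw [hC, Polynomial.derivative_C] at hPd
    exact one_ne_zero (neg_eq_zero.mp hPd.symm)
  obtain ⟨s, hs⟩ := IsAlgClosed.exists_root P hP0
  have hsroot : (qpoly p k β m).eval s = s := by
    have h4 : P.eval s = 0 := hs
    rw [hPdef, Polynomial.eval_sub, Polynomial.eval_X, sub_eq_zero] at h4
    exact h4
  obtain ⟨t, ht⟩ := piR_surjective p n k hn s
  set c : ℕ → R := cR p n k t b with hcdef
  have hc : piR p n k hn (c m) = s := by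
    rw [hcdef, qpoly_eval, ht, ← hβdef, hsroot]
  obtain ⟨z, hz⟩ := piR_ker p n k hn (t - c m) (by rw [map_sub, ht, hc, sub_self])
  -- assemble the fixed point
  refine ⟨∑ i ∈ Finset.range (m + 1), c i • g i, ?_⟩
  have hΦx : Φ (∑ i ∈ Finset.range (m + 1), c i • g i)
      = ∑ i ∈ Finset.range (m + 1), sigmaR p n k (c i) • g (i + 1) := by
    rw [map_sum]
    exact Finset.sum_congr rfl fun i _ => by rw [hΦ, hg]
  rw [hΦx]
  have hsig : ∀ i, sigmaR p n k (c i) = c (i + 1) - sigmaR p n k t * b (i + 1) := by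
    intro i
    show _ = cR p n k t b (i + 1) - _
    rw [cR]
    ring
  have step1 : (∑ i ∈ Finset.range (m + 1), c i • g i)
        - ∑ i ∈ Finset.range (m + 1), sigmaR p n k (c i) • g (i + 1)
      = (c 0 • g 0 - c (m + 1) • g (m + 1))
        + ∑ i ∈ Finset.range (m + 1), (sigmaR p n k t * b (i + 1)) • g (i + 1) := by
    rw [← Finset.sum_sub_distrib, ← Finset.sum_range_sub' (fun i => c i • g i) (m + 1),
      ← Finset.sum_add_distrib]
    apply Finset.sum_congr rfl
    intro i _
    rw [hsig i, sub_smul]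
    abel
  have hc0 : c 0 • g 0 = v + (sigmaR p n k t * b 0) • g 0 := by
    have hg0 : g 0 = v := rfl
    show cR p n k t b 0 • g 0 = _
    rw [cR, add_smul, one_smul, hg0]
  have hcm1 : c (m + 1) • g (m + 1) = sigmaR p n k (c m) • g (m + 1) := by
    show cR p n k t b (m + 1) • _ = _
    rw [cR, hbtop, mul_zero, add_zero]
  have hshift : ∑ i ∈ Finset.range (m + 1), (sigmaR p n k t * b (i + 1)) • g (i + 1)
      = (∑ i ∈ Finset.range (m + 1), (sigmaR p n k t * b i) • g i)
        - (sigmaR p n k t * b 0) • g 0 := by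
    have h5 := Finset.sum_range_succ' (fun i => (sigmaR p n k t * b i) • g i) (m + 1)
    have h6 := Finset.sum_range_succ (fun i => (sigmaR p n k t * b i) • g i) (m + 1)
    have h7 := h5.symm.trans h6
    rw [hbtop, mul_zero, zero_smul, add_zero] at h7
    rw [eq_sub_iff_add_eq]
    exact h7
  have hsum : ∑ i ∈ Finset.range (m + 1), (sigmaR p n k t * b i) • g i
      = sigmaR p n k t • g (m + 1) := by
    rw [← hb, Finset.smul_sum]
    exact Finset.sum_congr rfl fun i _ => mul_smul _ _ _
  rw [step1, hc0, hcm1, hshift, hsum]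
  have hfin : sigmaR p n k t • g (m + 1) - sigmaR p n k (c m) • g (m + 1) = 0 := by
    rw [← sub_smul, ← map_sub, hz, map_mul, map_natCast, mul_smul, h1]
  calc v + (sigmaR p n k t * b 0) • g 0 - sigmaR p n k (c m) • g (m + 1)
        + (sigmaR p n k t • g (m + 1) - (sigmaR p n k t * b 0) • g 0)
      = v + (sigmaR p n k t • g (m + 1) - sigmaR p n k (c m) • g (m + 1)) := by abel
    _ = v := by rw [hfin, add_zero]

theorem keyA [IsAlgClosed k] (j : ℕ) :
    ∀ (N : Type u) [AddCommGroup N],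
    ∀ [Module (TruncatedWittVector p n k) N],
    ∀ [Module.Finite (TruncatedWittVector p n k) N],
    ∀ (Φ : N →+ N),
    (∀ (c : TruncatedWittVector p n k) (x : N), Φ (c • x) = sigmaR p n k c • Φ x) →
    (∀ v : N, ((p : TruncatedWittVector p n k) ^ j) • v = 0) →
    ∀ v : N, ∃ x : N, x - Φ x = v := by
  induction j with
  | zero =>
      intro N _ _ _ Φ hΦ hj v
      have hv : v = 0 := by
        have := hj v
        rwa [pow_zero, one_smul] at this
      exact ⟨0, by rw [hv, map_zero, sub_zero]⟩
  | succ j ih =>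
      intro N _ _ _ Φ hΦ hj v
      set R := TruncatedWittVector p n k with hRdef
      have hΦp : ∀ w : N, Φ ((p : R) • w) = (p : R) • Φ w := fun w => by
        rw [hΦ, map_natCast]
      set S : Submodule R N := LinearMap.range (LinearMap.lsmul R N (p : R)) with hSdef
      have hmemS : ∀ w : N, w ∈ S ↔ ∃ u : N, (p : R) • u = w := by
        intro w
        constructor
        · rintro ⟨u, hu⟩; exact ⟨u, hu⟩
        · rintro ⟨u, hu⟩; exact ⟨u, hu⟩
      have hS : ∀ w ∈ S, Φ w ∈ S := by
        intro w hw
        obtain ⟨u, hu⟩ := (hmemS w).mp hw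
        exact (hmemS _).mpr ⟨Φ u, by rw [← hΦp, hu]⟩
      -- the quotient N / pN
      let ΦQ : (N ⧸ S) →+ (N ⧸ S) :=
        QuotientAddGroup.map S.toAddSubgroup S.toAddSubgroup Φ (fun w hw => hS w hw)
      have hmk : ∀ x : N, ΦQ (Submodule.Quotient.mk x) = Submodule.Quotient.mk (Φ x) :=
        fun x => rfl
      haveI : Module.Finite R (N ⧸ S) :=
        Module.Finite.of_surjective S.mkQ (Submodule.mkQ_surjective S)
      have hΦQ : ∀ (c : R) (q : N ⧸ S), ΦQ (c • q) = sigmaR p n k c • ΦQ q := by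
        intro c q
        obtain ⟨x, rfl⟩ := Submodule.Quotient.mk_surjective S q
        rw [← Submodule.Quotient.mk_smul, hmk, hΦ, hmk, Submodule.Quotient.mk_smul]
      have h1Q : ∀ q : N ⧸ S, (p : R) • q = 0 := by
        intro q
        obtain ⟨x, rfl⟩ := Submodule.Quotient.mk_surjective S q
        rw [← Submodule.Quotient.mk_smul, Submodule.Quotient.mk_eq_zero]
        exact (hmemS _).mpr ⟨x, rfl⟩
      obtain ⟨xq, hxq⟩ := key1 p n k ΦQ hΦQ h1Q (Submodule.Quotient.mk v)
      obtain ⟨x, rfl⟩ := Submodule.Quotient.mk_surjective S xq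
      have hxv : x - Φ x - v ∈ S := by
        rw [← Submodule.Quotient.mk_eq_zero]
        have : Submodule.Quotient.mk (x - Φ x - v)
            = (Submodule.Quotient.mk x - ΦQ (Submodule.Quotient.mk x)
                - Submodule.Quotient.mk v : N ⧸ S) := by
          rw [hmk, ← Submodule.Quotient.mk_sub, ← Submodule.Quotient.mk_sub]
        rw [this, hxq, sub_self]
      -- the submodule pN
      let ΦS : S →+ S := AddMonoidHom.mk' (fun w => ⟨Φ w, hS w w.2⟩)
        (fun a b => by apply Subtype.ext; simp)
      haveI : Module.Finite R S := by
        haveI := isNoetherian_R p n k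
        exact Module.Finite.iff_fg.mpr (IsNoetherian.noetherian S)
      have hΦS : ∀ (c : R) (w : S), ΦS (c • w) = sigmaR p n k c • ΦS w := by
        intro c w
        apply Subtype.ext
        show Φ ((c • w : S) : N) = sigmaR p n k c • Φ (w : N)
        rw [Submodule.coe_smul]
        exact hΦ c w
      have hjS : ∀ w : S, ((p : R) ^ j) • w = 0 := by
        intro w
        obtain ⟨u, hu⟩ := (hmemS (w : N)).mp w.2
        apply Subtype.ext
        show ((p : R) ^ j) • (w : N) = 0
        rw [← hu, ← mul_smul, ← pow_succ]
        exact hj u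
      obtain ⟨uS, huS⟩ := ih S ΦS hΦS hjS ⟨x - Φ x - v, hxv⟩
      have h8 : (uS : N) - Φ (uS : N) = x - Φ x - v := congrArg Subtype.val huS
      refine ⟨x - uS, ?_⟩
      rw [map_sub]
      calc x - (uS : N) - (Φ x - Φ (uS : N))
          = (x - Φ x) - ((uS : N) - Φ (uS : N)) := by abel
        _ = v := by rw [h8]; abel

theorem surjA [IsAlgClosed k] {N : Type u} [AddCommGroup N]
    [Module (TruncatedWittVector p n k) N]
    [Module.Finite (TruncatedWittVector p n k) N]
    (Φ : N →+ N)
    (hΦ : ∀ (c : TruncatedWittVector p n k) (x : N), Φ (c • x) = sigmaR p n k c • Φ x)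
    (v : N) : ∃ x : N, x - Φ x = v := by
  refine keyA p n k n N Φ hΦ (fun w => ?_) v
  rw [p_pow_n_eq_zero, zero_smul]

end FPAux

theorem fixed_points_mod_p
    (p d n : ℕ) [Fact p.Prime] (hd : d ≠ 0)
    (M : Type*) [AddCommGroup M] [Module (TruncatedWittVector p n (FqBar p d)) M]
    [Module.Finite (TruncatedWittVector p n (FqBar p d)) M]
    (Φ : M →+ M)
    (hΦ : ∀ (c : TruncatedWittVector p n (FqBar p d)) (x : M),
      Φ (c • x) = truncatedWittFrobenius p n (FqBar p d) c • Φ x) :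
    (∀ y : M, (∃ z : M, Φ y - y = (p : TruncatedWittVector p n (FqBar p d)) • z) →
      ∃ x : M, Φ x = x ∧ ∃ w : M, y - x = (p : TruncatedWittVector p n (FqBar p d)) • w) ∧
    (∀ x : M, Φ x = x → (∃ z : M, x = (p : TruncatedWittVector p n (FqBar p d)) • z) →
      ∃ z : M, Φ z = z ∧ x = (p : TruncatedWittVector p n (FqBar p d)) • z) := by
  set k := FqBar p d with hkdef
  set R := TruncatedWittVector p n k with hRdef
  have hΦ' : ∀ (c : R) (x : M), Φ (c • x) = FPAux.sigmaR p n k c • Φ x := by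
    intro c x
    rw [hΦ, FPAux.truncFrob_eq]
  have hΦp : ∀ w : M, Φ ((p : R) • w) = (p : R) • Φ w := fun w => by
    rw [hΦ', map_natCast]
  constructor
  · -- surjectivity of M^{Φ=1}/p → (M/pM)^{Φ=1}
    rintro y ⟨z, hz⟩
    obtain ⟨w, hw⟩ := FPAux.surjA p n k Φ hΦ' (-z)
    have h2 : Φ w - w = z := by rw [← neg_sub w (Φ w), hw, neg_neg]
    refine ⟨y - (p : R) • w, ?_, w, by abel⟩
    have h1 : Φ (y - (p : R) • w) - (y - (p : R) • w)
        = (Φ y - y) - (p : R) • (Φ w - w) := by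
      rw [map_sub, hΦp, smul_sub]
      abel
    rw [h2, hz, sub_self] at h1
    rw [← sub_eq_zero]
    exact h1
  · -- injectivity
    rintro x hfix ⟨z0, hz0⟩
    -- p-torsion submodule
    set T : Submodule R M := LinearMap.ker (LinearMap.lsmul R M (p : R)) with hTdef
    have hmemT : ∀ w : M, w ∈ T ↔ (p : R) • w = 0 := fun w => Iff.rfl
    have hT : ∀ w ∈ T, Φ w ∈ T := by
      intro w hw
      rw [hmemT] at hw ⊢
      rw [← hΦp, hw, map_zero]
    let ΦT : T →+ T := AddMonoidHom.mk' (fun w => ⟨Φ w, hT w w.2⟩)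
      (fun a b => by apply Subtype.ext; simp)
    haveI : Module.Finite R T := by
      haveI := FPAux.isNoetherian_R p n k
      exact Module.Finite.iff_fg.mpr (IsNoetherian.noetherian T)
    have hΦT : ∀ (c : R) (w : T), ΦT (c • w) = FPAux.sigmaR p n k c • ΦT w := by
      intro c w
      apply Subtype.ext
      show Φ ((c • w : T) : M) = FPAux.sigmaR p n k c • Φ (w : M)
      rw [Submodule.coe_smul]
      exact hΦ' c w
    have h1T : ∀ w : T, ((p : R) ^ 1) • w = 0 := by
      intro w
      apply Subtype.ext
      show ((p : R) ^ 1) • (w : M) = 0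
      rw [pow_one]
      exact (hmemT (w : M)).mp w.2
    have hwT : Φ z0 - z0 ∈ T := by
      rw [hmemT, smul_sub, ← hΦp, ← hz0, hfix, sub_self]
    obtain ⟨uT, huT⟩ := FPAux.keyA p n k 1 T ΦT hΦT h1T ⟨Φ z0 - z0, hwT⟩
    have h8 : (uT : M) - Φ (uT : M) = Φ z0 - z0 := congrArg Subtype.val huT
    refine ⟨z0 + uT, ?_, ?_⟩
    · rw [map_add]
      have : Φ z0 + Φ (uT : M) - (z0 + (uT : M))
          = (Φ z0 - z0) - ((uT : M) - Φ (uT : M)) := by abel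
      rw [← sub_eq_zero, this, h8, sub_self]
    · have hpu : (p : R) • (uT : M) = 0 := (hmemT (uT : M)).mp uT.2
      rw [smul_add, hpu, add_zero, hz0]
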